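/- Let u_t be a positive integer, let u_e > 0, c_t > 0, c_e > 0 and φ > 0. Then (c_e^{u_e}/(2·Γ(u_e))) · ∫_0^∞ γ^{u_e/2 − 1} e^{−c_e √γ} · ( 1 − e^{−c_t √(φγ)} Σ_{η=0}^{u_t−1} (c_t √(φγ))^η / η! ) dγ = 1 − Σ_{η=0}^{u_t−1} (Γ(η+u_e)/(η!·Γ(u_e))) · (c_t √φ)^η · c_e^{u_e} / (c_t √φ + c_e)^{η+u_e}. -/

import Mathlib

open MeasureTheory Real

lemma aux_intble {q b : ℝ} (hq : -1 < q) (hb : 0 < b) :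
    IntegrableOn (fun γ : ℝ => γ ^ q * Real.exp (-b * Real.sqrt γ)) (Set.Ioi 0) := by
  rw [← integrableOn_Ioi_comp_rpow_iff _ (two_ne_zero (α := ℝ))]
  have h : IntegrableOn (fun x : ℝ => |(2:ℝ)| * (x ^ (2*q+1) * Real.exp (-b * x)))
      (Set.Ioi 0) := by
    have := integrableOn_rpow_mul_exp_neg_mul_rpow (p := 1) (s := 2*q+1) (b := b)
      (by linarith) one_pos hb
    simp_rw [Real.rpow_one] at this
    exact this.const_mul _
  refine (integrableOn_congr_fun (fun x hx => ?_) measurableSet_Ioi).mpr h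
  have hx : (0:ℝ) < x := hx
  have h1 : Real.sqrt (x ^ (2:ℝ)) = x := by
    rw [show (2:ℝ) = ((2:ℕ):ℝ) by norm_num, Real.rpow_natCast, Real.sqrt_sq hx.le]
  have h2 : (x ^ (2:ℝ)) ^ q = x ^ (2*q) := by
    rw [← Real.rpow_mul hx.le]
  rw [smul_eq_mul, h1, h2, show (2:ℝ)-1 = 1 by norm_num, Real.rpow_one,
    Real.rpow_add hx, Real.rpow_one]
  ring

lemma aux_val {s b : ℝ} (hs : 0 < s) (hb : 0 < b) :
    ∫ γ in Set.Ioi (0:ℝ), γ ^ (s/2 - 1) * Real.exp (-b * Real.sqrt γ) =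
      2 * Real.Gamma s / b ^ s := by
  have h : ∫ γ in Set.Ioi (0:ℝ), γ ^ (s/2 - 1) * Real.exp (-b * Real.sqrt γ) =
      ∫ γ in Set.Ioi (0:ℝ), γ ^ (s/2 - 1) * Real.exp (-b * γ ^ ((1:ℝ)/2)) := by
    refine setIntegral_congr_fun measurableSet_Ioi (fun x hx => ?_)
    rw [Real.sqrt_eq_rpow]
  rw [h, integral_rpow_mul_exp_neg_mul_rpow (by norm_num) (by linarith) hb]
  have e1 : -(s/2 - 1 + 1) / ((1:ℝ)/2) = -s := by ring
  have e2 : (s/2 - 1 + 1) / ((1:ℝ)/2) = s := by ring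
  rw [e1, e2, Real.rpow_neg hb.le]
  have : (0:ℝ) < b ^ s := Real.rpow_pos_of_pos hb s
  field_simp

/-- The Scenario-III RF-hop secrecy integral in elementary form. -/
theorem stmt_2 (ut : ℕ) (hut : 0 < ut) (ue ct ce φ : ℝ)
    (hue : 0 < ue) (hct : 0 < ct) (hce : 0 < ce) (hφ : 0 < φ) :
    (ce ^ ue / (2 * Real.Gamma ue)) *
      ∫ γ in Set.Ioi (0:ℝ),
        γ ^ (ue / 2 - 1) * Real.exp (-ce * Real.sqrt γ) *
          (1 - Real.exp (-ct * Real.sqrt (φ * γ)) *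
            ∑ η ∈ Finset.range ut, (ct * Real.sqrt (φ * γ)) ^ η / (Nat.factorial η : ℝ)) =
    1 - ∑ η ∈ Finset.range ut,
        (Real.Gamma (η + ue) / ((Nat.factorial η : ℝ) * Real.Gamma ue)) *
          (ct * Real.sqrt φ) ^ η * ce ^ ue / (ct * Real.sqrt φ + ce) ^ ((η : ℝ) + ue) := by
  set d : ℝ := ct * Real.sqrt φ + ce with hd
  have hsφ : 0 < Real.sqrt φ := Real.sqrt_pos.mpr hφ
  have hdpos : 0 < d := by positivity
  -- rewrite the integrand
  have hcong : ∀ γ ∈ Set.Ioi (0:ℝ),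
      γ ^ (ue / 2 - 1) * Real.exp (-ce * Real.sqrt γ) *
          (1 - Real.exp (-ct * Real.sqrt (φ * γ)) *
            ∑ η ∈ Finset.range ut, (ct * Real.sqrt (φ * γ)) ^ η / (Nat.factorial η : ℝ)) =
      γ ^ (ue / 2 - 1) * Real.exp (-ce * Real.sqrt γ) -
        ∑ η ∈ Finset.range ut, ((ct * Real.sqrt φ) ^ η / (Nat.factorial η : ℝ)) *
          (γ ^ ((η + ue) / 2 - 1) * Real.exp (-d * Real.sqrt γ)) := by
    intro γ hγ
    have hγ : (0:ℝ) < γ := hγ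
    have hsqrtmul : Real.sqrt (φ * γ) = Real.sqrt φ * Real.sqrt γ := Real.sqrt_mul hφ.le γ
    rw [hsqrtmul, mul_sub, mul_one]
    congr 1
    rw [Finset.mul_sum, Finset.mul_sum]
    refine Finset.sum_congr rfl (fun η _ => ?_)
    have hpow : Real.sqrt γ ^ η = γ ^ ((η:ℝ)/2) := by
      rw [Real.sqrt_eq_rpow, ← Real.rpow_natCast (γ ^ ((1:ℝ)/2)) η, ← Real.rpow_mul hγ.le]
      congr 1
      ring
    have hrpow : γ ^ (ue/2 - 1) * γ ^ ((η:ℝ)/2) = γ ^ ((η + ue)/2 - 1) := by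
      rw [← Real.rpow_add hγ]
      congr 1
      ring
    have hexp : Real.exp (-ce * Real.sqrt γ) * Real.exp (-ct * (Real.sqrt φ * Real.sqrt γ)) =
        Real.exp (-d * Real.sqrt γ) := by
      rw [← Real.exp_add]
      congr 1
      rw [hd]; ring
    rw [show (ct * (Real.sqrt φ * Real.sqrt γ)) ^ η = (ct * Real.sqrt φ) ^ η * Real.sqrt γ ^ η by
      rw [← mul_pow]; ring_nf]
    rw [hpow]
    calc γ ^ (ue/2-1) * Real.exp (-ce * Real.sqrt γ) *
          (Real.exp (-ct * (Real.sqrt φ * Real.sqrt γ)) *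
            ((ct * Real.sqrt φ) ^ η * γ ^ ((η:ℝ)/2) / (Nat.factorial η : ℝ)))
        = ((ct * Real.sqrt φ) ^ η / (Nat.factorial η : ℝ)) *
          ((γ ^ (ue/2-1) * γ ^ ((η:ℝ)/2)) *
            (Real.exp (-ce * Real.sqrt γ) * Real.exp (-ct * (Real.sqrt φ * Real.sqrt γ)))) := by
          ring
      _ = _ := by rw [hrpow, hexp]
  rw [setIntegral_congr_fun measurableSet_Ioi hcong]
  -- split the integral
  have hint0 : IntegrableOn (fun γ : ℝ => γ ^ (ue/2 - 1) * Real.exp (-ce * Real.sqrt γ))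
      (Set.Ioi 0) := aux_intble (by linarith) hce
  have hintη : ∀ η ∈ Finset.range ut, IntegrableOn
      (fun γ : ℝ => ((ct * Real.sqrt φ) ^ η / (Nat.factorial η : ℝ)) *
        (γ ^ ((η + ue)/2 - 1) * Real.exp (-d * Real.sqrt γ))) (Set.Ioi 0) := by
    intro η _
    have hη : (0:ℝ) ≤ (η:ℝ) := Nat.cast_nonneg η
    exact (aux_intble (by linarith) hdpos).const_mul _
  have hintsum : IntegrableOn (fun γ : ℝ => ∑ η ∈ Finset.range ut,
      ((ct * Real.sqrt φ) ^ η / (Nat.factorial η : ℝ)) *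
        (γ ^ ((η + ue)/2 - 1) * Real.exp (-d * Real.sqrt γ))) (Set.Ioi 0) :=
    integrable_finset_sum _ hintη
  rw [integral_sub hint0 hintsum, integral_finset_sum _ hintη]
  simp_rw [integral_const_mul]
  rw [aux_val hue hce]
  have hval : ∀ η ∈ Finset.range ut,
      ((ct * Real.sqrt φ) ^ η / (Nat.factorial η : ℝ)) *
        ∫ γ in Set.Ioi (0:ℝ), γ ^ (((η:ℝ) + ue)/2 - 1) * Real.exp (-d * Real.sqrt γ) =
      ((ct * Real.sqrt φ) ^ η / (Nat.factorial η : ℝ)) *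
        (2 * Real.Gamma ((η:ℝ) + ue) / d ^ ((η:ℝ) + ue)) := by
    intro η _
    rw [aux_val (by positivity) hdpos]
  rw [Finset.sum_congr rfl hval]
  have hGue : 0 < Real.Gamma ue := Real.Gamma_pos_of_pos hue
  have hGue' := hGue.ne'
  have hcepos : (0:ℝ) < ce ^ ue := Real.rpow_pos_of_pos hce ue
  have hcepos' := hcepos.ne'
  rw [mul_sub, Finset.mul_sum]
  congr 1
  · field_simp
  · refine Finset.sum_congr rfl (fun η _ => ?_)
    have hfη : ((Nat.factorial η : ℝ)) ≠ 0 := by positivity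
    have hdη : d ^ ((η:ℝ) + ue) ≠ 0 := (Real.rpow_pos_of_pos hdpos _).ne'
    field_simp
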